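/- Let M be an A-module with AV-module structure π. For every multi-index k ∈ ℕ^n with k ≠ 0 and all p, q ∈ {1,…,n}, the operator ρ_{k,p} commutes with π(∂/∂x_q): π(∂/∂x_q) ∘ ρ_{k,p} = ρ_{k,p} ∘ π(∂/∂x_q) as maps M → M. -/

import Mathlib

open MvPolynomial

attribute [local instance 100] LieRing.ofAssociativeRing
set_option linter.unusedSectionVars false
set_option linter.unusedVariables false

section Aux
variable {k : Type*} [Field k] [CharZero k] {n : ℕ}
variable {M : Type*} [AddCommGroup M] [Module k M]
  [Module (MvPolynomial (Fin n) k) M] [IsScalarTower k (MvPolynomial (Fin n) k) M]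

/-- coefficient normal form -/
lemma aux_coeff (s N : ℕ) (t : Fin n →₀ ℕ) :
    ((-1 : MvPolynomial (Fin n) k) ^ s * (N : MvPolynomial (Fin n) k) * monomial t (1 : k))
      = monomial t ((-1 : k) ^ s * N) := by
  rw [show ((-1 : MvPolynomial (Fin n) k) = C (-1 : k)) by simp,
    show ((N : MvPolynomial (Fin n) k) = C (N : k)) by simp,
    ← C_pow, ← C_mul, C_mul_monomial, mul_one]

lemma aux_smul (f : MvPolynomial (Fin n) k) (c : k) (x : M) :
    f • (c • x) = (C c * f) • x := by
  rw [show (C c : MvPolynomial (Fin n) k) = algebraMap k _ c from rfl,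
    ← smul_eq_mul, smul_assoc, algebraMap_smul]
  exact smul_comm f c x

lemma aux_bracket (j : Fin n →₀ ℕ) (p q : Fin n) :
    ⁅(pderiv q : Derivation k (MvPolynomial (Fin n) k) (MvPolynomial (Fin n) k)),
        (monomial j (1 : k)) • (pderiv p : Derivation k (MvPolynomial (Fin n) k) (MvPolynomial (Fin n) k))⁆
      = (monomial (j - Finsupp.single q 1) ((j q : k))) •
        (pderiv p : Derivation k (MvPolynomial (Fin n) k) (MvPolynomial (Fin n) k)) := by
  apply derivation_ext
  intro i
  rw [Derivation.commutator_apply]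
  simp only [Derivation.smul_apply, pderiv_X, smul_eq_mul]
  by_cases hip : i = p
  · subst hip
    rcases eq_or_ne i q with h | h <;>
      simp [h, Pi.single_apply, pderiv_monomial]
  · simp only [Pi.single_apply, hip, if_false, mul_zero, mul_one]
    split <;> simp [hip]

end Aux

section Aux2
variable {k : Type*} [Field k] [CharZero k] {n : ℕ}
variable {M : Type*} [AddCommGroup M] [Module k M]
  [Module (MvPolynomial (Fin n) k) M] [IsScalarTower k (MvPolynomial (Fin n) k) M]

lemma aux_zero (K : Fin n →₀ ℕ) (q : Fin n) (F : (Fin n →₀ ℕ) → M) :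
    ∑ j ∈ Finset.Iic K,
      ((monomial (K - j) ((j q : k) *
          ((-1 : k) ^ ((K - j).sum fun _ v => v) * ((∏ i, (K i).choose (j i) : ℕ) : k)))) •
            F (j - Finsupp.single q 1)
        + (monomial (K - j - Finsupp.single q 1)
            (((-1 : k) ^ ((K - j).sum fun _ v => v) * ((∏ i, (K i).choose (j i) : ℕ) : k)) *
              (((K - j) q : ℕ) : k))) • F j) = 0 := by
  classical
  set e : Fin n →₀ ℕ := Finsupp.single q 1 with he
  set t1 : (Fin n →₀ ℕ) → M := fun j =>
    (monomial (K - j) ((j q : k) *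
      ((-1 : k) ^ ((K - j).sum fun _ v => v) * ((∏ i, (K i).choose (j i) : ℕ) : k)))) •
        F (j - e) with ht1
  set t2 : (Fin n →₀ ℕ) → M := fun j =>
    (monomial (K - j - e)
      (((-1 : k) ^ ((K - j).sum fun _ v => v) * ((∏ i, (K i).choose (j i) : ℕ) : k)) *
        (((K - j) q : ℕ) : k))) • F j with ht2
  rw [Finset.sum_add_distrib]
  have h1 : ∑ j ∈ (Finset.Iic K).filter (fun j => j q ≠ 0), t1 j = ∑ j ∈ Finset.Iic K, t1 j := by
    apply Finset.sum_filter_of_ne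
    intro j _ hne hjq
    apply hne
    rw [ht1]
    simp [hjq]
  have h2 : ∑ j ∈ (Finset.Iic K).filter (fun j => (K - j) q ≠ 0), t2 j
      = ∑ j ∈ Finset.Iic K, t2 j := by
    apply Finset.sum_filter_of_ne
    intro j _ hne hjq
    apply hne
    rw [ht2]
    simp [hjq]
  rw [← h1, ← h2]
  have key : ∑ j ∈ (Finset.Iic K).filter (fun j => j q ≠ 0), t1 j
      = ∑ j ∈ (Finset.Iic K).filter (fun j => (K - j) q ≠ 0), -t2 j := by
    refine Finset.sum_nbij' (fun j => j - e) (fun j => j + e) ?_ ?_ ?_ ?_ ?_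
    · intro j hj
      rw [Finset.mem_filter, Finset.mem_Iic, Finsupp.le_def] at hj ⊢
      have hq : j q ≠ 0 := hj.2
      have hle := hj.1
      constructor
      · intro i
        rw [Finsupp.tsub_apply]
        exact le_trans (Nat.sub_le _ _) (hle i)
      · have := hle q
        simp only [Finsupp.tsub_apply, he, Finsupp.single_apply, eq_self_iff_true, if_true]
        omega
    · intro j hj
      rw [Finset.mem_filter, Finset.mem_Iic, Finsupp.le_def] at hj ⊢
      have hq : (K - j) q ≠ 0 := hj.2
      rw [Finsupp.tsub_apply] at hq
      have hle := hj.1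
      constructor
      · intro i
        rw [Finsupp.add_apply, he, Finsupp.single_apply]
        rcases eq_or_ne q i with h | h
        · subst h; have := hle q; simp; omega
        · simp [h]; exact hle i
      · rw [Finsupp.add_apply, he, Finsupp.single_eq_same]
        omega
    · intro j hj
      rw [Finset.mem_filter] at hj
      ext i
      rw [Finsupp.add_apply, Finsupp.tsub_apply, he, Finsupp.single_apply]
      rcases eq_or_ne q i with h | h
      · subst h; simp only [eq_self_iff_true, if_true]; have := hj.2; omega
      · simp [h]
    · intro j hj
      ext i
      rw [Finsupp.tsub_apply, Finsupp.add_apply, he, Finsupp.single_apply]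
      rcases eq_or_ne q i with h | h
      · subst h; simp
      · simp [h]
    · intro j hj
      rw [Finset.mem_filter, Finset.mem_Iic, Finsupp.le_def] at hj
      obtain ⟨hle, hq⟩ := hj
      have hq1 : 1 ≤ j q := Nat.one_le_iff_ne_zero.mpr hq
      have hKq : j q ≤ K q := hle q
      -- index equality : K - (j - e) - e = K - j
      have hidx : K - (j - e) - e = K - j := by
        ext i
        rw [Finsupp.tsub_apply, Finsupp.tsub_apply, Finsupp.tsub_apply, Finsupp.tsub_apply,
          he, Finsupp.single_apply]
        rcases eq_or_ne q i with h | h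
        · subst h; simp only [eq_self_iff_true, if_true]; have := hle q; omega
        · simp [h]
      -- sum equality
      have hKj : K - (j - e) = (K - j) + e := by
        ext i
        rw [Finsupp.tsub_apply, Finsupp.tsub_apply, Finsupp.add_apply, Finsupp.tsub_apply,
          he, Finsupp.single_apply]
        rcases eq_or_ne q i with h | h
        · subst h; simp only [eq_self_iff_true, if_true]; have := hle q; omega
        · simp [h]
      have hS : ((K - (j - e)).sum fun _ v => v) = ((K - j).sum fun _ v => v) + 1 := by
        rw [hKj, Finsupp.sum_add_index' (fun _ => rfl) (fun _ _ _ => rfl), he,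
          Finsupp.sum_single_index rfl]
      -- product equality
      have hjq' : (j - e) q = j q - 1 := by
        rw [Finsupp.tsub_apply, he, Finsupp.single_eq_same]
      have hKjq' : (K - (j - e)) q = K q - (j q - 1) := by
        rw [Finsupp.tsub_apply, hjq']
      set P : ℕ := ∏ i ∈ Finset.univ.erase q, (K i).choose (j i) with hP
      have hprod1 : (∏ i, (K i).choose (j i)) = (K q).choose (j q) * P :=
        (Finset.mul_prod_erase _ _ (Finset.mem_univ q)).symm
      have hprod2 : (∏ i, (K i).choose ((j - e) i)) = (K q).choose (j q - 1) * P := by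
        rw [← Finset.mul_prod_erase _ (fun i => (K i).choose ((j - e) i)) (Finset.mem_univ q),
          hjq']
        congr 1
        refine Finset.prod_congr rfl fun i hi => ?_
        have hiq : q ≠ i := fun h => (Finset.mem_erase.mp hi).1 h.symm
        rw [Finsupp.tsub_apply, he, Finsupp.single_apply, if_neg hiq, Nat.sub_zero]
      -- nat identity
      have hnat : j q * ((K q).choose (j q) * P)
          = ((K q).choose (j q - 1) * P) * (K q - (j q - 1)) := by
        obtain ⟨t, ht⟩ : ∃ t, j q = t + 1 := ⟨j q - 1, by omega⟩
        rw [ht]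
        have hc := Nat.choose_succ_right_eq (K q) t
        have h1 : (t + 1) * ((K q).choose (t + 1) * P) = ((K q).choose (t + 1) * (t + 1)) * P := by
          ring
        rw [h1, hc]
        have : t + 1 - 1 = t := by omega
        rw [this]
        ring
      -- cast identity
      have hcast : (j q : k) * ((∏ i, (K i).choose (j i) : ℕ) : k)
          = ((∏ i, (K i).choose ((j - e) i) : ℕ) : k) * (((K - (j - e)) q : ℕ) : k) := by
        rw [hprod1, hprod2, hKjq']
        exact_mod_cast congrArg (Nat.cast : ℕ → k) hnat
      -- final
      rw [ht1, ht2]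
      simp only
      rw [hidx, hS]
      rw [← neg_smul]
      congr 1
      rw [← map_neg (monomial (K - j))]
      congr 1
      rw [pow_succ]
      linear_combination ((-1 : k) ^ ((K - j).sum fun _ v => v)) * hcast
  rw [key, ← Finset.sum_add_distrib]
  simp

end Aux2

section Aux3
variable {k : Type*} [Field k] [CharZero k] {n : ℕ}
variable {M : Type*} [AddCommGroup M] [Module k M]
  [Module (MvPolynomial (Fin n) k) M] [IsScalarTower k (MvPolynomial (Fin n) k) M]

lemma aux_comm (π : Derivation k (MvPolynomial (Fin n) k) (MvPolynomial (Fin n) k)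
      →ₗ⁅k⁆ Module.End k M) (q : Fin n)
    (D : Derivation k (MvPolynomial (Fin n) k) (MvPolynomial (Fin n) k)) (m : M) :
    π (pderiv q) (π D m)
      = π D (π (pderiv q) m)
        + π ⁅(pderiv q : Derivation k (MvPolynomial (Fin n) k) (MvPolynomial (Fin n) k)), D⁆ m := by
  have h := LieHom.map_lie π (pderiv q) D
  rw [Ring.lie_def] at h
  have h2 := congrArg (fun f : Module.End k M => f m) h
  simp only [LinearMap.sub_apply, Module.End.mul_apply] at h2
  rw [h2]
  abel

end Aux3


/-- The operator `ρ_{K,p}` built from an `AV`-module structure `π`: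
`ρ_{K,p}(m) = Σ_{0 ≤ j ≤ K} (−1)^{|K−j|} C(K,j) X^{K−j} • π(X^j ∂_p)(m)`. -/
noncomputable def rho {k : Type*} [Field k] [CharZero k] {n : ℕ}
    {M : Type*} [AddCommGroup M] [Module k M]
    [Module (MvPolynomial (Fin n) k) M] [IsScalarTower k (MvPolynomial (Fin n) k) M]
    (π : Derivation k (MvPolynomial (Fin n) k) (MvPolynomial (Fin n) k)
        →ₗ⁅k⁆ Module.End k M)
    (K : Fin n →₀ ℕ) (p : Fin n) (m : M) : M :=
  ∑ j ∈ Finset.Iic K,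
    (((-1 : MvPolynomial (Fin n) k) ^ ((K - j).sum fun _ v => v)) *
        ((∏ i, (K i).choose (j i) : ℕ) : MvPolynomial (Fin n) k) *
        monomial (K - j) (1 : k)) •
      π ((monomial j (1 : k) : MvPolynomial (Fin n) k) • pderiv p) m

/-- For every nonzero multi-index `K` and all `p, q`, the operator
`ρ_{K,p}` commutes with `π(∂/∂x_q)`. -/
theorem rho_commutes_with_partials
    (k : Type*) [Field k] [CharZero k] (n : ℕ)
    (M : Type*) [AddCommGroup M] [Module k M]
    [Module (MvPolynomial (Fin n) k) M] [IsScalarTower k (MvPolynomial (Fin n) k) M]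
    (π : Derivation k (MvPolynomial (Fin n) k) (MvPolynomial (Fin n) k)
        →ₗ⁅k⁆ Module.End k M)
    (hLeibniz : ∀ (η : Derivation k (MvPolynomial (Fin n) k) (MvPolynomial (Fin n) k))
        (f : MvPolynomial (Fin n) k) (m : M),
        π η (f • m) = f • (π η m) + (η f) • m)
    (K : Fin n →₀ ℕ) (hK : K ≠ 0) (p q : Fin n) :
    ∀ m : M, π (pderiv q) (rho π K p m) = rho π K p (π (pderiv q) m) := by
  classical
  intro m
  set e : Fin n →₀ ℕ := Finsupp.single q 1 with he
  set a : (Fin n →₀ ℕ) → k := fun j =>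
    (-1 : k) ^ ((K - j).sum fun _ v => v) * ((∏ i, (K i).choose (j i) : ℕ) : k) with ha
  set D : (Fin n →₀ ℕ) → Derivation k (MvPolynomial (Fin n) k) (MvPolynomial (Fin n) k) :=
    fun j => (monomial j (1 : k)) • pderiv p with hD
  have hrho : ∀ x : M, rho π K p x
      = ∑ j ∈ Finset.Iic K, (monomial (K - j) (a j)) • π (D j) x := by
    intro x
    unfold rho
    refine Finset.sum_congr rfl fun j _ => ?_
    rw [aux_coeff, ha, hD]
  have hterm : ∀ j ∈ Finset.Iic K,
      π (pderiv q) ((monomial (K - j) (a j)) • π (D j) m)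
        = (monomial (K - j) (a j)) • π (D j) (π (pderiv q) m)
          + ((monomial (K - j) ((j q : k) * a j)) • π (D (j - e)) m
            + (monomial (K - j - e) (a j * (((K - j) q : ℕ) : k))) • π (D j) m) := by
    intro j _
    rw [hLeibniz, aux_comm]
    have hb : π ⁅(pderiv q : Derivation k (MvPolynomial (Fin n) k) (MvPolynomial (Fin n) k)),
        D j⁆ m = (j q : k) • π (D (j - e)) m := by
      rw [hD]
      rw [aux_bracket]
      have hmon : (monomial (j - Finsupp.single q 1) ((j q : k)) : MvPolynomial (Fin n) k)
            • (pderiv p : Derivation k (MvPolynomial (Fin n) k) (MvPolynomial (Fin n) k))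
          = (j q : k) • ((monomial (j - e) (1 : k) : MvPolynomial (Fin n) k) • pderiv p) := by
        rw [← smul_assoc, he]
        congr 1
        rw [smul_monomial, smul_eq_mul, mul_one]
      rw [hmon, map_smul, LinearMap.smul_apply]
    rw [hb]
    have hsm : (monomial (K - j) (a j) : MvPolynomial (Fin n) k) • ((j q : k) • π (D (j - e)) m)
        = (monomial (K - j) ((j q : k) * a j)) • π (D (j - e)) m := by
      rw [aux_smul, C_mul_monomial]
    have hpd : (pderiv q) ((monomial (K - j) (a j)) : MvPolynomial (Fin n) k)
        = monomial (K - j - e) (a j * (((K - j) q : ℕ) : k)) := by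
      rw [pderiv_monomial, he]
    rw [smul_add, hsm, hpd]
    abel
  rw [hrho m, hrho (π (pderiv q) m), map_sum, Finset.sum_congr rfl hterm,
    Finset.sum_add_distrib]
  have hz : ∑ j ∈ Finset.Iic K,
      ((monomial (K - j) ((j q : k) * a j)) • π (D (j - e)) m
        + (monomial (K - j - e) (a j * (((K - j) q : ℕ) : k))) • π (D j) m) = 0 := by
    rw [ha, he]
    exact aux_zero K q (fun j => π (D j) m)
  rw [hz, add_zero]
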